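/- arXiv:1801.03967 — 5 statements merged into one kernel-verified Lean document; each statement's English description precedes it below -/
import Mathlib

section
/- Let r₁,…,r_m ∈ K(x₁,…,xₙ) be rational functions with r_i = p_i/q_i for polynomials p_i, q_i ∈ K[x], q_i ≠ 0. Then the ideal of all polynomials p ∈ K[y₁,…,y_m] with p(r₁,…,r_m) = 0 (the ideal of algebraic relations among r₁,…,r_m) equals ((Σ_{i=1}^m ⟨q_i·y_i − p_i⟩) : ⟨lcm(q₁,…,q_m)⟩^∞) ∩ K[y₁,…,y_m], i.e., the saturation of the ideal generated by the q_i·y_i − p_i with respect to lcm(q₁,…,q_m), intersected with K[y]. -/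
open MvPolynomial

/-- the ideal of algebraic relations among rational functions
`rᵢ = pᵢ/qᵢ` equals the saturation of `⟨qᵢ·yᵢ - pᵢ⟩` with respect to
`d = lcm(q₁,…,q_m)`, intersected with `K[y]`.  Membership formulation: a
polynomial `f ∈ K[y₁,…,y_m]` satisfies `f(r₁,…,r_m) = 0` iff some power of `d`
times `f` (viewed in `K[x,y]`) lies in the ideal generated by the `qᵢ·yᵢ - pᵢ`. -/
theorem stmt_4 (K : Type*) [Field K] (n m : ℕ)
    (p q : Fin m → MvPolynomial (Fin n) K) (hq : ∀ i, q i ≠ 0)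
    (d : MvPolynomial (Fin n) K)
    (hd₁ : ∀ i, q i ∣ d)
    (hd₂ : ∀ e : MvPolynomial (Fin n) K, (∀ i, q i ∣ e) → d ∣ e)
    (F : Type*) [Field F] [Algebra (MvPolynomial (Fin n) K) F]
    [IsFractionRing (MvPolynomial (Fin n) K) F]
    (r : Fin m → F)
    (hr : ∀ i, r i = algebraMap (MvPolynomial (Fin n) K) F (p i) /
                    algebraMap (MvPolynomial (Fin n) K) F (q i))
    (J : Ideal (MvPolynomial (Fin n ⊕ Fin m) K))
    (hJ : J = Ideal.span (Set.range fun i : Fin m =>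
      rename Sum.inl (q i) * X (Sum.inr i) - rename Sum.inl (p i))) :
    ∀ f : MvPolynomial (Fin m) K,
      eval₂ ((algebraMap (MvPolynomial (Fin n) K) F).comp (C : K →+* _)) r f = 0 ↔
        ∃ k : ℕ, (rename Sum.inl d) ^ k * rename Sum.inr f ∈ J := by
  set χ : K →+* F := (algebraMap (MvPolynomial (Fin n) K) F).comp C with hχ
  have hinj : Function.Injective (algebraMap (MvPolynomial (Fin n) K) F) :=
    IsFractionRing.injective _ _
  have hqz : ∀ i, algebraMap (MvPolynomial (Fin n) K) F (q i) ≠ 0 := fun i =>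
    (map_ne_zero_iff _ hinj).2 (hq i)
  have hd0 : d ≠ 0 := by
    have h1 : (∏ i, q i) ≠ 0 := Finset.prod_ne_zero_iff.2 fun i _ => hq i
    exact ne_zero_of_dvd_ne_zero h1 (hd₂ _ fun i => Finset.dvd_prod_of_mem _ (Finset.mem_univ i))
  have hdz : algebraMap (MvPolynomial (Fin n) K) F d ≠ 0 := (map_ne_zero_iff _ hinj).2 hd0
  choose s hs using hd₁
  set Φ : MvPolynomial (Fin n ⊕ Fin m) K →+* F :=
    eval₂Hom χ (Sum.elim (fun i => algebraMap (MvPolynomial (Fin n) K) F (X i)) r) with hΦ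
  have halg : ∀ a : MvPolynomial (Fin n) K,
      Φ (rename Sum.inl a) = algebraMap (MvPolynomial (Fin n) K) F a := by
    intro a
    induction a using MvPolynomial.induction_on with
    | C a => simp [hΦ, hχ]
    | add f g hf hg => simp [map_add, hf, hg]
    | mul_X f i hf => rw [map_mul, map_mul, hf]; simp [map_mul, hf, hΦ]
  have hren : ∀ f : MvPolynomial (Fin m) K, Φ (rename Sum.inr f) = eval₂ χ r f := by
    intro f
    rw [hΦ, coe_eval₂Hom, eval₂_rename]
    rfl
  have hri : ∀ i, algebraMap (MvPolynomial (Fin n) K) F (q i) * r i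
      = algebraMap (MvPolynomial (Fin n) K) F (p i) := by
    intro i
    rw [hr i, mul_div_cancel₀ _ (hqz i)]
  have hJ0 : ∀ t ∈ J, Φ t = 0 := by
    have hle : J ≤ RingHom.ker Φ := by
      rw [hJ, Ideal.span_le]
      rintro _ ⟨i, rfl⟩
      simp only [SetLike.mem_coe, RingHom.mem_ker, map_sub, map_mul, halg]
      have hX : Φ (X (Sum.inr i)) = r i := by simp [hΦ]
      rw [hX, hri i, sub_self]
    exact fun t ht => hle ht
  have keyJ : ∀ i, rename Sum.inl d * X (Sum.inr i) - rename Sum.inl (s i * p i) ∈ J := by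
    intro i
    have heq : rename Sum.inl d * X (Sum.inr i) - rename Sum.inl (s i * p i)
        = rename Sum.inl (s i) *
          (rename Sum.inl (q i) * X (Sum.inr i) - rename Sum.inl (p i)) := by
      rw [hs i]
      simp only [map_mul]
      ring
    rw [heq, hJ]
    exact Ideal.mul_mem_left _ _ (Ideal.subset_span ⟨i, rfl⟩)
  have halgs : ∀ i, algebraMap (MvPolynomial (Fin n) K) F d * r i
      = algebraMap (MvPolynomial (Fin n) K) F (s i * p i) := by
    intro i
    rw [hs i, map_mul, map_mul, mul_comm (algebraMap _ F (q i)), mul_assoc, hri i]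
  have main : ∀ f : MvPolynomial (Fin m) K, ∃ (k : ℕ) (g : MvPolynomial (Fin n) K),
      (rename Sum.inl d) ^ k * rename Sum.inr f - rename Sum.inl g ∈ J ∧
      algebraMap (MvPolynomial (Fin n) K) F g
        = (algebraMap (MvPolynomial (Fin n) K) F d) ^ k * eval₂ χ r f := by
    intro f
    induction f using MvPolynomial.induction_on with
    | C a =>
      refine ⟨0, C a, ?_, ?_⟩
      · simp [J.zero_mem]
      · simp [hχ]
    | add f₁ f₂ h₁ h₂ =>
      obtain ⟨k₁, g₁, hm₁, he₁⟩ := h₁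
      obtain ⟨k₂, g₂, hm₂, he₂⟩ := h₂
      refine ⟨k₁ + k₂, d ^ k₂ * g₁ + d ^ k₁ * g₂, ?_, ?_⟩
      · have heq : (rename Sum.inl d) ^ (k₁ + k₂) * rename Sum.inr (f₁ + f₂)
            - rename Sum.inl (d ^ k₂ * g₁ + d ^ k₁ * g₂)
          = (rename Sum.inl d) ^ k₂ *
              ((rename Sum.inl d) ^ k₁ * rename Sum.inr f₁ - rename Sum.inl g₁)
            + (rename Sum.inl d) ^ k₁ *
              ((rename Sum.inl d) ^ k₂ * rename Sum.inr f₂ - rename Sum.inl g₂) := by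
          simp only [map_add, map_mul, map_pow]
          ring
        rw [heq]
        exact J.add_mem (J.mul_mem_left _ hm₁) (J.mul_mem_left _ hm₂)
      · simp only [map_add, map_mul, map_pow, eval₂_add, he₁, he₂]
        ring
    | mul_X f i hf =>
      obtain ⟨k, g, hm, he⟩ := hf
      refine ⟨k + 1, g * (s i * p i), ?_, ?_⟩
      · have heq : (rename Sum.inl d) ^ (k + 1) * rename Sum.inr (f * X i)
            - rename Sum.inl (g * (s i * p i))
          = (rename Sum.inl d * X (Sum.inr i)) *
              ((rename Sum.inl d) ^ k * rename Sum.inr f - rename Sum.inl g)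
            + rename Sum.inl g *
              (rename Sum.inl d * X (Sum.inr i) - rename Sum.inl (s i * p i)) := by
          simp only [map_mul, map_pow, rename_X]
          ring
        rw [heq]
        exact J.add_mem (J.mul_mem_left _ hm) (J.mul_mem_left _ (keyJ i))
      · rw [map_mul, he, ← halgs i, eval₂_mul, eval₂_X, pow_succ]
        ring
  intro f
  constructor
  · intro hf
    obtain ⟨k, g, hm, he⟩ := main f
    have hg0 : g = 0 := by
      apply hinj
      rw [he, hf, mul_zero, map_zero]
    rw [hg0, map_zero, sub_zero] at hm
    exact ⟨k, hm⟩
  · rintro ⟨k, hk⟩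
    have := hJ0 _ hk
    rw [map_mul, map_pow, halg, hren] at this
    rcases mul_eq_zero.1 this with h | h
    · exact absurd h (pow_ne_zero _ hdz)
    · exact h
end

section
/- For any polynomial p ∈ K[y₁,…,y_m] with p(r₁,…,r_m) = 0 for rational functions r_i = p_i/q_i, there exists k ∈ ℕ such that d^k · p(y₁,…,y_m), after substituting y_i ↦ p_i and clearing denominators with d = lcm(q₁,…,q_m), lies in the ideal generated by the polynomials q_i·y_i − p_i in K[x,y]. -/
open MvPolynomial

/-- if `f(r₁,…,r_m) = 0` for rational functions `rᵢ = pᵢ/qᵢ`, then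
some power of `d = lcm(q₁,…,q_m)` times `f` (denominators cleared) lies in the
ideal generated by the `qᵢ·yᵢ - pᵢ` in `K[x,y]`. -/
theorem stmt_5 (K : Type*) [Field K] (n m : ℕ)
    (p q : Fin m → MvPolynomial (Fin n) K) (hq : ∀ i, q i ≠ 0)
    (d : MvPolynomial (Fin n) K)
    (hd₁ : ∀ i, q i ∣ d)
    (hd₂ : ∀ e : MvPolynomial (Fin n) K, (∀ i, q i ∣ e) → d ∣ e)
    (F : Type*) [Field F] [Algebra (MvPolynomial (Fin n) K) F]
    [IsFractionRing (MvPolynomial (Fin n) K) F]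
    (r : Fin m → F)
    (hr : ∀ i, r i = algebraMap (MvPolynomial (Fin n) K) F (p i) /
                    algebraMap (MvPolynomial (Fin n) K) F (q i))
    (J : Ideal (MvPolynomial (Fin n ⊕ Fin m) K))
    (hJ : J = Ideal.span (Set.range fun i : Fin m =>
      rename Sum.inl (q i) * X (Sum.inr i) - rename Sum.inl (p i))) :
    ∀ f : MvPolynomial (Fin m) K,
      eval₂ ((algebraMap (MvPolynomial (Fin n) K) F).comp (C : K →+* _)) r f = 0 →
        ∃ k : ℕ, (rename Sum.inl d) ^ k * rename Sum.inr f ∈ J := by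
  classical
  intro f hf
  choose c hc using hd₁
  have hinj := IsFractionRing.injective (MvPolynomial (Fin n) K) F
  have hqF : ∀ i, algebraMap (MvPolynomial (Fin n) K) F (q i) ≠ 0 := by
    intro i h
    exact hq i (hinj (by simpa using h))
  have hgen : ∀ i, (rename Sum.inl (q i) * X (Sum.inr i) - rename Sum.inl (p i)) ∈ J := by
    intro i
    rw [hJ]
    exact Ideal.subset_span ⟨i, rfl⟩
  have key : ∀ i, Ideal.Quotient.mk J (rename Sum.inl d * X (Sum.inr i)) =
      Ideal.Quotient.mk J (rename Sum.inl (c i * p i)) := by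
    intro i
    rw [Ideal.Quotient.eq]
    have h1 : rename (Sum.inl : Fin n → Fin n ⊕ Fin m) d * X (Sum.inr i)
        - rename Sum.inl (c i * p i)
        = rename Sum.inl (c i) *
          (rename Sum.inl (q i) * X (Sum.inr i) - rename Sum.inl (p i)) := by
      rw [hc i]
      simp only [map_mul]
      ring
    rw [h1]
    exact Ideal.mul_mem_left _ _ (hgen i)
  have main : ∀ f : MvPolynomial (Fin m) K, ∃ (k : ℕ) (g : MvPolynomial (Fin n) K),
      Ideal.Quotient.mk J ((rename Sum.inl d) ^ k * rename Sum.inr f) =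
        Ideal.Quotient.mk J (rename Sum.inl g) ∧
      algebraMap (MvPolynomial (Fin n) K) F g =
        (algebraMap (MvPolynomial (Fin n) K) F d) ^ k *
          eval₂ ((algebraMap (MvPolynomial (Fin n) K) F).comp (C : K →+* _)) r f := by
    intro f
    induction f using MvPolynomial.induction_on with
    | C a =>
        exact ⟨0, C a, by simp, by simp⟩
    | add f1 f2 ih1 ih2 =>
        obtain ⟨k1, g1, hm1, hF1⟩ := ih1
        obtain ⟨k2, g2, hm2, hF2⟩ := ih2
        refine ⟨k1 + k2, d ^ k2 * g1 + d ^ k1 * g2, ?_, ?_⟩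
        · simp only [map_mul, map_pow] at hm1 hm2
          simp only [map_add, map_mul, map_pow]
          rw [← hm1, ← hm2]
          ring
        · simp only [map_add, map_mul, map_pow, hF1, hF2, eval₂_add]
          ring
    | mul_X f1 i ih =>
        obtain ⟨k, g, hm, hF⟩ := ih
        refine ⟨k + 1, g * (c i * p i), ?_, ?_⟩
        · simp only [map_mul, map_pow] at hm
          have h2 : Ideal.Quotient.mk J (rename Sum.inl d) *
              Ideal.Quotient.mk J (X (Sum.inr i)) =
              Ideal.Quotient.mk J (rename Sum.inl (c i * p i)) := by
            rw [← map_mul]; exact key i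
          calc Ideal.Quotient.mk J ((rename Sum.inl d) ^ (k + 1) * rename Sum.inr (f1 * X i))
              = (Ideal.Quotient.mk J (rename Sum.inl d)) ^ k *
                  Ideal.Quotient.mk J (rename Sum.inr f1) *
                  (Ideal.Quotient.mk J (rename Sum.inl d) *
                   Ideal.Quotient.mk J (X (Sum.inr i))) := by
                simp only [map_mul, map_pow, rename_X]
                set_option synthInstance.maxHeartbeats 1000000 in ring
            _ = Ideal.Quotient.mk J (rename Sum.inl g) *
                  Ideal.Quotient.mk J (rename Sum.inl (c i * p i)) := by rw [hm, h2]
            _ = Ideal.Quotient.mk J (rename Sum.inl (g * (c i * p i))) := by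
                simp [map_mul]
        · have hd : algebraMap (MvPolynomial (Fin n) K) F (c i * p i) =
              algebraMap (MvPolynomial (Fin n) K) F d * r i := by
            rw [hr i, hc i]
            simp only [map_mul]
            have hqq : (algebraMap (MvPolynomial (Fin n) K) F) (q i) *
                ((algebraMap (MvPolynomial (Fin n) K) F) (p i) /
                 (algebraMap (MvPolynomial (Fin n) K) F) (q i)) =
                (algebraMap (MvPolynomial (Fin n) K) F) (p i) := by
              rw [mul_comm, div_mul_cancel₀ _ (hqF i)]
            rw [mul_comm ((algebraMap (MvPolynomial (Fin n) K) F) (q i))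
                ((algebraMap (MvPolynomial (Fin n) K) F) (c i)), mul_assoc, hqq]
          simp only [map_mul, map_pow, hF, eval₂_mul, eval₂_X, hd]
          ring
  obtain ⟨k, g, hmk, hF⟩ := main f
  rw [hf, mul_zero] at hF
  have hg0 : g = 0 := hinj (by simpa using hF)
  refine ⟨k, ?_⟩
  rw [hg0, map_zero, map_zero] at hmk
  rwa [Ideal.Quotient.eq_zero_iff_mem] at hmk
end

section
/- If a prime ideal P in a commutative ring R has height n, then n is the maximal length of chains of prime ideals P₀ ⊂ P₁ ⊂ … ⊂ Pₙ = P, and the height of any prime ideal of K[x₁,…,x_m] is at most m. -/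
open MvPolynomial

open MvPolynomial

lemma chain_indep {K A : Type*} [Field K] [CommRing A] [Algebra K A] :
    ∀ (l : ℕ) (p : Fin (l + 1) → Ideal A), (∀ i, (p i).IsPrime) → StrictMono p →
    ∀ x : Fin l → A, (∀ i : Fin l, x i ∈ p i.succ ∧ x i ∉ p i.castSucc) →
    ∀ Q : MvPolynomial (Fin l) K, aeval x Q ∈ p 0 → Q = 0 := by
  intro l
  induction l with
  | zero =>
    intro p hp _ x _ Q hQ
    rw [Q.eq_C_of_isEmpty] at hQ ⊢
    rw [aeval_C] at hQ
    by_contra hne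
    have hc : Q.coeff 0 ≠ 0 := by
      intro h0; exact hne (by rw [h0, map_zero])
    exact (hp 0).ne_top (Ideal.eq_top_of_isUnit_mem _ hQ
      ((IsUnit.mk0 _ hc).map (algebraMap K A)))
  | succ l IH =>
    intro p hp hmono x hx Q hQ
    set x0 := x 0 with hx0
    set x' : Fin l → A := x ∘ Fin.succ with hx'
    have key : ∀ f : MvPolynomial (Fin (l + 1)) K,
        aeval x f = Polynomial.eval₂ ((aeval x' : MvPolynomial (Fin l) K →ₐ[K] A) : _ →+* A)
          x0 (finSuccEquiv K l f) := by
      intro f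
      have : (Polynomial.eval₂RingHom
            ((aeval x' : MvPolynomial (Fin l) K →ₐ[K] A) : _ →+* A) x0).comp
            (finSuccEquiv K l : MvPolynomial (Fin (l+1)) K →+* Polynomial (MvPolynomial (Fin l) K))
          = (aeval x : MvPolynomial (Fin (l+1)) K →ₐ[K] A).toRingHom := by
        apply MvPolynomial.ringHom_ext
        · intro c
          simp [finSuccEquiv_apply]
        · intro i
          refine Fin.cases ?_ ?_ i
          · simp [finSuccEquiv_X_zero]; rfl
          · intro j
            simp [finSuccEquiv_X_succ, hx']
      exact (RingHom.congr_fun this.symm f :)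
    -- chain data for induction
    have hp' : ∀ i, ((p ∘ Fin.succ) i).IsPrime := fun i => hp _
    have hmono' : StrictMono (p ∘ Fin.succ) := hmono.comp Fin.strictMono_succ
    have hx'' : ∀ i : Fin l, x' i ∈ (p ∘ Fin.succ) i.succ ∧ x' i ∉ (p ∘ Fin.succ) i.castSucc := by
      intro i
      refine ⟨(hx i.succ).1, ?_⟩
      have := (hx i.succ).2
      show x i.succ ∉ p i.castSucc.succ
      rw [Fin.succ_castSucc]; exact this
    have inner : ∀ (n : ℕ) (q : Polynomial (MvPolynomial (Fin l) K)), q.natDegree ≤ n →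
        Polynomial.eval₂ ((aeval x' : MvPolynomial (Fin l) K →ₐ[K] A) : _ →+* A) x0 q ∈ p 0 →
        q = 0 := by
      intro n
      induction n with
      | zero =>
        intro q hdeg hq
        have hqC : q = Polynomial.C (q.coeff 0) := Polynomial.eq_C_of_natDegree_le_zero hdeg
        rw [hqC, Polynomial.eval₂_C] at hq
        have h1 : aeval x' (q.coeff 0) ∈ (p ∘ Fin.succ) 0 := by
          have : p 0 ≤ p 1 := (hmono (by norm_num : (0 : Fin (l+2)) < 1)).le
          simpa using this hq
        have := IH (p ∘ Fin.succ) hp' hmono' x' hx'' (q.coeff 0) h1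
        rw [hqC, this, map_zero]
      | succ n IHn =>
        intro q hdeg hq
        have hsplit : Polynomial.X * q.divX + Polynomial.C (q.coeff 0) = q :=
          Polynomial.X_mul_divX_add q
        have heval : x0 * Polynomial.eval₂ ((aeval x' : MvPolynomial (Fin l) K →ₐ[K] A) : MvPolynomial (Fin l) K →+* A) x0 q.divX + aeval x' (q.coeff 0)
            = Polynomial.eval₂ ((aeval x' : MvPolynomial (Fin l) K →ₐ[K] A) : _ →+* A) x0 q := by
          conv_rhs => rw [← hsplit]
          rw [Polynomial.eval₂_add, Polynomial.eval₂_mul, Polynomial.eval₂_X, Polynomial.eval₂_C]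
          rfl
        have hx0p1 : x0 ∈ p 1 := by simpa using (hx 0).1
        have hc0 : q.coeff 0 = 0 := by
          have hmem : aeval x' (q.coeff 0) ∈ (p ∘ Fin.succ) 0 := by
            have h01 : p 0 ≤ p 1 := (hmono (by norm_num : (0 : Fin (l+2)) < 1)).le
            have : aeval x' (q.coeff 0)
                = Polynomial.eval₂ ((aeval x' : MvPolynomial (Fin l) K →ₐ[K] A) : _ →+* A) x0 q
                  - x0 * Polynomial.eval₂ ((aeval x' : MvPolynomial (Fin l) K →ₐ[K] A) : MvPolynomial (Fin l) K →+* A) x0 q.divX := by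
              rw [← heval]; ring
            rw [Function.comp_apply]
            rw [this]
            exact Ideal.sub_mem _ (h01 hq) (Ideal.mul_mem_right _ _ hx0p1)
          exact IH (p ∘ Fin.succ) hp' hmono' x' hx'' (q.coeff 0) hmem
        have hq' : x0 * Polynomial.eval₂ ((aeval x' : MvPolynomial (Fin l) K →ₐ[K] A) : _ →+* A)
            x0 q.divX ∈ p 0 := by
          have : x0 * Polynomial.eval₂ ((aeval x' : MvPolynomial (Fin l) K →ₐ[K] A) : MvPolynomial (Fin l) K →+* A) x0 q.divX
              = Polynomial.eval₂ ((aeval x' : MvPolynomial (Fin l) K →ₐ[K] A) : _ →+* A) x0 q := by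
            rw [← heval, hc0, map_zero, add_zero]
          rw [this]; exact hq
        have hx0p0 : x0 ∉ p 0 := by simpa using (hx 0).2
        have hdivmem : Polynomial.eval₂ ((aeval x' : MvPolynomial (Fin l) K →ₐ[K] A) : _ →+* A)
            x0 q.divX ∈ p 0 := ((hp 0).mem_or_mem hq').resolve_left hx0p0
        have hdivdeg : q.divX.natDegree ≤ n := by
          have := Polynomial.natDegree_divX_eq_natDegree_tsub_one (p := q)
          omega
        have hdiv0 : q.divX = 0 := IHn q.divX hdivdeg hdivmem
        rw [← hsplit, hdiv0, hc0, map_zero, mul_zero, add_zero]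
    have hQ0 : finSuccEquiv K l Q = 0 := by
      refine inner _ (finSuccEquiv K l Q) le_rfl ?_
      rw [← key]; exact hQ
    exact (finSuccEquiv K l).injective (by rw [hQ0, map_zero])


lemma not_algIndep {K : Type*} [Field K] {m l : ℕ} (hml : m < l)
    (f : Fin l → MvPolynomial (Fin m) K) : ¬ AlgebraicIndependent K f := by
  intro h
  set d := 1 + Finset.univ.sup (fun i => (f i).totalDegree) with hd
  have hfd : ∀ i, (f i).totalDegree ≤ d := by
    intro i
    rw [hd]
    exact le_trans (Finset.le_sup (f := fun j => (f j).totalDegree) (Finset.mem_univ i))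
      (Nat.le_add_left _ 1)
  set N := (l * d + 1) ^ m with hN
  have hN1 : 1 ≤ N := Nat.one_le_pow _ _ (Nat.succ_pos _)
  set D := l * N * d with hD
  set ι := (Fin l → Fin (N + 1)) with hι
  set g : ι → (Fin l →₀ ℕ) := fun a => Finsupp.equivFunOnFinite.symm (fun i => (a i : ℕ))
    with hg
  have hginj : Function.Injective g := by
    intro a b hab
    have h1 : (fun i => ((a i : ℕ))) = (fun i => ((b i : ℕ))) :=
      Finsupp.equivFunOnFinite.symm.injective hab
    funext i
    exact Fin.ext (congrFun h1 i)
  have hmono_li : LinearIndependent K (fun a : ι => (monomial (g a) (1 : K))) := by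
    have h0 := (basisMonomials (Fin l) K).linearIndependent.comp g hginj
    rw [coe_basisMonomials] at h0
    exact h0
  have hv : LinearIndependent K (fun a : ι => aeval f (monomial (g a) (1 : K))) := by
    have := hmono_li.map' (aeval f).toLinearMap (LinearMap.ker_eq_bot.mpr (by exact h))
    exact this
  have hprod : ∀ a : ι, aeval f (monomial (g a) (1 : K)) = ∏ i : Fin l, f i ^ (a i : ℕ) := by
    intro a
    rw [aeval_monomial, map_one, one_mul]
    rw [Finsupp.prod_fintype]
    · exact Finset.prod_congr rfl (fun i _ => by simp [hg])
    · intro i; exact pow_zero _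
  have hmem : ∀ a : ι, aeval f (monomial (g a) (1 : K)) ∈ restrictTotalDegree (Fin m) K D := by
    intro a
    rw [mem_restrictTotalDegree, hprod a]
    calc (∏ i : Fin l, f i ^ (a i : ℕ)).totalDegree
        ≤ ∑ i : Fin l, (f i ^ (a i : ℕ)).totalDegree := totalDegree_finset_prod _ _
      _ ≤ ∑ _i : Fin l, N * d := by
          refine Finset.sum_le_sum (fun i _ => ?_)
          refine le_trans (totalDegree_pow _ _) ?_
          exact Nat.mul_le_mul (Nat.lt_succ_iff.mp (a i).isLt) (hfd i)
      _ = l * N * d := by simp [Finset.sum_const, mul_assoc]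
  -- the submodule is finite dimensional with small rank
  set s : Set (Fin m →₀ ℕ) := { n | (n.sum fun _ e => e) ≤ D } with hs
  have hle : ∀ (n : Fin m →₀ ℕ) i, n i ≤ n.sum fun _ e => e := by
    intro n i
    by_cases hi : i ∈ n.support
    · exact Finset.single_le_sum (f := fun j => n j) (fun _ _ => Nat.zero_le _) hi
    · simp [Finsupp.notMem_support_iff.mp hi]
  set emb : s → (Fin m → Fin (D + 1)) :=
    fun n => fun i => ⟨n.1 i, Nat.lt_succ_of_le (le_trans (hle n.1 i) n.2)⟩ with hemb
  have hembinj : Function.Injective emb := by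
    intro a b hab
    refine Subtype.ext (Finsupp.ext fun i => ?_)
    have := congrFun hab i
    simpa [hemb, Fin.ext_iff] using this
  haveI : Finite s := Finite.of_injective emb hembinj
  haveI : Fintype s := Fintype.ofFinite _
  have B : Module.Basis s K (restrictTotalDegree (Fin m) K D) := basisRestrictSupport K s
  haveI : Module.Finite K (restrictTotalDegree (Fin m) K D) := Module.Finite.of_basis B
  -- corestrict the family
  set w : ι → restrictTotalDegree (Fin m) K D :=
    fun a => ⟨aeval f (monomial (g a) (1 : K)), hmem a⟩ with hw
  have hwli : LinearIndependent K w := by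
    apply LinearIndependent.of_comp (restrictTotalDegree (Fin m) K D).subtype
    exact hv
  have hcard1 : Fintype.card ι ≤ Module.finrank K (restrictTotalDegree (Fin m) K D) :=
    hwli.fintype_card_le_finrank
  have hfr : Module.finrank K (restrictTotalDegree (Fin m) K D) = Fintype.card s :=
    Module.finrank_eq_card_basis B
  have hcard2 : Fintype.card s ≤ (D + 1) ^ m := by
    calc Fintype.card s ≤ Fintype.card (Fin m → Fin (D + 1)) :=
          Fintype.card_le_of_injective emb hembinj
      _ = (D + 1) ^ m := by simp
  have hcard3 : Fintype.card ι = (N + 1) ^ l := by simp [hι]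
  have hfinal : (N + 1) ^ l ≤ (D + 1) ^ m := by
    rw [← hcard3]
    exact le_trans hcard1 (hfr ▸ hcard2)
  -- arithmetic contradiction
  have h1 : D + 1 ≤ (l * d + 1) * N := by
    have : l * N * d + 1 ≤ l * d * N + N := by
      have : l * N * d = l * d * N := by ring
      omega
    calc D + 1 ≤ l * d * N + N := this
      _ = (l * d + 1) * N := by ring
  have h2 : (D + 1) ^ m ≤ N ^ (m + 1) := by
    calc (D + 1) ^ m ≤ ((l * d + 1) * N) ^ m := Nat.pow_le_pow_left h1 m
      _ = (l * d + 1) ^ m * N ^ m := by rw [mul_pow]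
      _ = N * N ^ m := by rw [hN]
      _ = N ^ (m + 1) := by rw [pow_succ]; ring
  have h3 : N ^ (m + 1) < (N + 1) ^ (m + 1) :=
    Nat.pow_lt_pow_left (Nat.lt_succ_self N) (Nat.succ_ne_zero m)
  have h4 : (N + 1) ^ (m + 1) ≤ (N + 1) ^ l :=
    Nat.pow_le_pow_right (Nat.le_add_left 1 N) hml
  omega

/-- if a prime ideal `P` of a commutative ring `R` has height `n`,
then `n` is the maximal length of chains of prime ideals
`P₀ ⊂ P₁ ⊂ … ⊂ Pₙ = P`; moreover the height of any prime ideal of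
`K[x₁,…,x_m]` is at most `m`. -/
theorem stmt_6 (R : Type*) [CommRing R] (P : Ideal R) (hP : P.IsPrime) (n : ℕ)
    (hn : Order.height (⟨P, hP⟩ : PrimeSpectrum R) = n) :
    IsGreatest {k : ℕ | ∃ c : Fin (k + 1) → PrimeSpectrum R,
        StrictMono c ∧ c (Fin.last k) = ⟨P, hP⟩} n ∧
    ∀ (K : Type) [Field K] (m : ℕ) (Q : Ideal (MvPolynomial (Fin m) K))
      (hQ : Q.IsPrime),
      Order.height (⟨Q, hQ⟩ : PrimeSpectrum (MvPolynomial (Fin m) K)) ≤ m := by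
  constructor
  · constructor
    · obtain ⟨q, hlast, hlen⟩ := Order.exists_series_of_height_eq_coe _ hn
      have hcast : n + 1 = q.length + 1 := by rw [hlen]
      refine ⟨fun i => q (Fin.cast hcast i), ?_, ?_⟩
      · intro a b hab
        exact q.strictMono hab
      · have hl : (Fin.cast hcast (Fin.last n)) = Fin.last q.length := by
          ext; simp [hlen]
        show q.toFun (Fin.cast hcast (Fin.last n)) = _
        rw [hl]
        exact hlast
    · rintro k ⟨c, hc, hlast⟩
      let q : LTSeries (PrimeSpectrum R) :=
        ⟨k, c, fun i => hc (Fin.castSucc_lt_succ (i := i))⟩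
      have h1 : (k : ℕ∞) ≤ Order.height q.last := Order.length_le_height_last
      have h2 : q.last = ⟨P, hP⟩ := hlast
      rw [h2, hn] at h1
      exact_mod_cast h1
  · intro K _ m Q hQ
    refine Order.height_le fun q hqlast => ?_
    by_contra hgt
    push_neg at hgt
    have hml : m < q.length := by exact_mod_cast hgt
    set p : Fin (q.length + 1) → Ideal (MvPolynomial (Fin m) K) :=
      fun i => (q i).asIdeal with hpdef
    have hp : ∀ i, (p i).IsPrime := fun i => (q i).isPrime
    have hmono : StrictMono p := by
      intro a b hab
      exact (PrimeSpectrum.asIdeal_lt_asIdeal _ _).mpr (q.strictMono hab)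
    have hex : ∀ i : Fin q.length, ∃ y, y ∈ p i.succ ∧ y ∉ p i.castSucc := by
      intro i
      obtain ⟨y, hy1, hy2⟩ := SetLike.exists_of_lt (hmono (Fin.castSucc_lt_succ (i := i)))
      exact ⟨y, hy1, hy2⟩
    choose x hx using hex
    have hAI : AlgebraicIndependent K x := by
      have hz : ∀ Qp : MvPolynomial (Fin q.length) K, aeval x Qp = 0 → Qp = 0 := by
        intro Qp hQp
        exact chain_indep q.length p hp hmono x hx Qp (by rw [hQp]; exact (p 0).zero_mem)
      exact (injective_iff_map_eq_zero
        (aeval x : MvPolynomial (Fin q.length) K →ₐ[K] _)).mpr hz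
    exact not_algIndep hml x hAI
end

section
/- For the algebraic dependencies of the exponential sequences 2^n, 4^n, 2^{−n}: the ideal I = ⟨y₁² − y₂, y₁y₃ − 1, y₂y₃ − y₁⟩ ◁ ℚ[y₁,y₂,y₃] satisfies: p ∈ I implies p(2^n, 4^n, 2^{−n}) = 0 for all n ∈ ℕ, and conversely every polynomial p ∈ ℚ[y₁,y₂,y₃] vanishing at (2^n, 4^n, 2^{−n}) for all n ∈ ℕ lies in I. -/
open MvPolynomial LaurentPolynomial

noncomputable def myPsi {R : Type*} [CommRing R] [Algebra ℚ R] (u : Rˣ) :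
    LaurentPolynomial ℚ →ₐ[ℚ] R :=
  AddMonoidAlgebra.lift ℚ R ℤ ((Units.coeHom R).comp (zpowersHom Rˣ u))

lemma myPsi_T {R : Type*} [CommRing R] [Algebra ℚ R] (u : Rˣ) (n : ℤ) :
    myPsi u (T n) = ((u ^ n : Rˣ) : R) := by
  rw [myPsi, LaurentPolynomial.T, AddMonoidAlgebra.lift_single]
  simp [zpowersHom_apply]

/-- the ideal `⟨y₁² - y₂, y₁y₃ - 1, y₂y₃ - y₁⟩ ◁ ℚ[y₁,y₂,y₃]`
is exactly the ideal of algebraic dependencies of the sequences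
`2ⁿ, 4ⁿ, 2⁻ⁿ`: a polynomial lies in it iff it vanishes at `(2ⁿ, 4ⁿ, 2⁻ⁿ)`
for all `n ∈ ℕ`. -/
theorem stmt_18 (I : Ideal (MvPolynomial (Fin 3) ℚ))
    (hI : I = Ideal.span {X 0 ^ 2 - X 1, X 0 * X 2 - 1, X 1 * X 2 - X 0}) :
    ∀ p : MvPolynomial (Fin 3) ℚ,
      p ∈ I ↔ ∀ n : ℕ,
        eval (fun i => (![(2 : ℚ) ^ n, 4 ^ n, (1/2 : ℚ) ^ n] i)) p = 0 := by
  intro p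
  constructor
  · intro hp n
    rw [hI] at hp
    have : Ideal.span ({X 0 ^ 2 - X 1, X 0 * X 2 - 1, X 1 * X 2 - X 0} :
        Set (MvPolynomial (Fin 3) ℚ)) ≤
        RingHom.ker (eval (fun i => (![(2 : ℚ) ^ n, 4 ^ n, (1/2 : ℚ) ^ n] i))) := by
      rw [Ideal.span_le]
      rintro q (rfl | rfl | rfl) <;>
        simp [RingHom.mem_ker, div_pow, show (4:ℚ) = 2^2 by norm_num, ← pow_mul,
          mul_comm] <;> ring_nf <;> field_simp <;> (rw [pow_mul', ← mul_pow]; norm_num)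
    exact this hp
  · intro hp
    set φ : MvPolynomial (Fin 3) ℚ →ₐ[ℚ] LaurentPolynomial ℚ :=
      aeval (fun i => (![T 1, T 2, T (-1)] i)) with hφ
    set u2 : ℚˣ := Units.mk0 2 (by norm_num) with hu2
    have hcomm : ∀ n : ℕ, ∀ q : MvPolynomial (Fin 3) ℚ,
        myPsi (u2 ^ n) (φ q) = eval (fun i => (![(2 : ℚ) ^ n, 4 ^ n, (1/2 : ℚ) ^ n] i)) q := by
      intro n q
      have : (myPsi (u2 ^ n)).comp φ =
          (MvPolynomial.aeval (fun i => (![(2 : ℚ) ^ n, 4 ^ n, (1/2 : ℚ) ^ n] i))) := by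
        apply MvPolynomial.algHom_ext
        intro i
        fin_cases i
        · simp [hφ, myPsi_T, hu2]
        · simp [hφ, myPsi_T, hu2]
          rw [← pow_mul, mul_comm, pow_mul]
          norm_num
        · simp only [hφ, AlgHom.comp_apply, aeval_X]
          show myPsi (u2 ^ n) (T (-1)) = _
          rw [myPsi_T]
          simp [hu2, div_pow]
      calc myPsi (u2 ^ n) (φ q) = ((myPsi (u2 ^ n)).comp φ) q := rfl
        _ = _ := by
          rw [this,
            show MvPolynomial.aeval (fun i => (![(2 : ℚ) ^ n, 4 ^ n, (1/2 : ℚ) ^ n] i)) q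
              = MvPolynomial.eval₂ (algebraMap ℚ ℚ) _ q from rfl,
            show (algebraMap ℚ ℚ) = RingHom.id ℚ from rfl]
          rfl
    have hφp : φ p = 0 := by
      obtain ⟨N, g, hg⟩ := LaurentPolynomial.exists_T_pow (φ p)
      have hgroots : ∀ n : ℕ, g.eval ((2:ℚ) ^ n) = 0 := by
        intro n
        have h1 : myPsi (u2 ^ n) (Polynomial.toLaurent g) = 0 := by
          rw [hg, map_mul, hcomm n p, hp n, zero_mul]
        have h2 : (myPsi (u2 ^ n)).comp (Polynomial.toLaurentAlg) =
            Polynomial.aeval ((2:ℚ) ^ n) := by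
          apply Polynomial.algHom_ext
          rw [AlgHom.comp_apply, Polynomial.toLaurentAlg_apply, Polynomial.toLaurent_X,
            myPsi_T]
          simp [hu2]
        have h3 := congrArg (fun f => f g) h2
        simp only [AlgHom.comp_apply, Polynomial.toLaurentAlg_apply] at h3
        rw [h1] at h3
        rw [Polynomial.coe_aeval_eq_eval] at h3
        exact h3.symm
      have hg0 : g = 0 := by
        apply Polynomial.eq_zero_of_infinite_isRoot
        exact Set.infinite_of_injective_forall_mem
          (f := fun n : ℕ => (2:ℚ) ^ n)
          (pow_right_strictMono₀ (by norm_num : (1:ℚ) < 2)).injective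
          (fun n => hgroots n)
      have h4 : φ p * T (N:ℤ) = 0 := by rw [← hg, hg0, map_zero]
      have h5 := congrArg (· * T (-(N:ℤ))) h4
      simp only [zero_mul] at h5
      rw [mul_assoc, ← LaurentPolynomial.T_add] at h5
      simpa using h5
    rw [← Ideal.Quotient.eq_zero_iff_mem]
    have hmem : ∀ q ∈ ({X 0 ^ 2 - X 1, X 0 * X 2 - 1, X 1 * X 2 - X 0} :
        Set (MvPolynomial (Fin 3) ℚ)), q ∈ I := by
      rw [hI]; intro q hq; exact Ideal.subset_span hq
    have h01 : Ideal.Quotient.mk I (X 0 * X 2) = 1 := by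
      have := hmem (X 0 * X 2 - 1) (by simp)
      rwa [← Ideal.Quotient.eq_zero_iff_mem, map_sub, sub_eq_zero, map_one] at this
    set u : (MvPolynomial (Fin 3) ℚ ⧸ I)ˣ :=
      ⟨Ideal.Quotient.mk I (X 0), Ideal.Quotient.mk I (X 2),
        by rw [← map_mul]; exact h01,
        by rw [← map_mul, mul_comm]; exact h01⟩ with hu
    have hpsiφ : (myPsi u).comp φ = Ideal.Quotient.mkₐ ℚ I := by
      apply MvPolynomial.algHom_ext
      intro i
      fin_cases i
      · simp [hφ, myPsi_T, hu]
      · have h02 := hmem (X 0 ^ 2 - X 1) (by simp)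
        rw [← Ideal.Quotient.eq_zero_iff_mem, map_sub, sub_eq_zero] at h02
        simp only [hφ, AlgHom.comp_apply, aeval_X]
        show myPsi u (T 2) = _
        rw [myPsi_T]
        rw [show ((2:ℤ) = ((2:ℕ):ℤ)) by norm_num, zpow_natCast,
          Units.val_pow_eq_pow_val]
        simp only [hu]
        rw [← map_pow (Ideal.Quotient.mk I) (X 0) 2, h02]
        rfl
      · simp only [hφ, AlgHom.comp_apply, aeval_X]
        show myPsi u (T (-1)) = _
        rw [myPsi_T]
        simp [hu]
    have hfin := congrArg (fun f => f p) hpsiφ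
    simp only [AlgHom.comp_apply] at hfin
    rw [hφp, map_zero] at hfin
    exact hfin.symm ▸ rfl
end

section
/- The ideal ⟨y₁² − y₂²⟩ ◁ ℚ[y₁,y₂], which is the ideal of all algebraic dependencies among the sequences 2^n and (−2)^n (i.e., equals { p ∈ ℚ[y₁,y₂] : ∀ n ∈ ℕ, p(2^n, (−2)^n) = 0 }), is radical but not prime. -/
open MvPolynomial

/-- substitute `X 0 := c` in `ℚ[X 0, X 1]` -/
noncomputable def stmt19sub (c : MvPolynomial (Fin 2) ℚ) :
    MvPolynomial (Fin 2) ℚ →ₐ[ℚ] MvPolynomial (Fin 2) ℚ := aeval ![c, X 1]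

/-- to univariate: `X 0 ↦ c`, `X 1 ↦ X` -/
noncomputable def stmt19psi (c : Polynomial ℚ) :
    MvPolynomial (Fin 2) ℚ →ₐ[ℚ] Polynomial ℚ := aeval ![c, Polynomial.X]

/-- back: `X ↦ X 1` -/
noncomputable def stmt19eta : Polynomial ℚ →ₐ[ℚ] MvPolynomial (Fin 2) ℚ :=
  Polynomial.aeval (X 1)

lemma stmt19sub_X0 (c : MvPolynomial (Fin 2) ℚ) : stmt19sub c (X 0) = c := by
  simp [stmt19sub]

lemma stmt19sub_X1 (c : MvPolynomial (Fin 2) ℚ) : stmt19sub c (X 1) = X 1 := by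
  simp [stmt19sub]

lemma dvd_sub_stmt19sub (c p : MvPolynomial (Fin 2) ℚ) :
    (X 0 - c) ∣ p - stmt19sub c p := by
  induction p using MvPolynomial.induction_on with
  | C a => simp [stmt19sub]
  | add p q hp hq =>
      have := dvd_add hp hq
      rwa [sub_add_sub_comm, ← map_add] at this
  | mul_X p i hp =>
      have hXi : (X 0 - c) ∣ (X i - stmt19sub c (X i)) := by
        obtain rfl | rfl : i = 0 ∨ i = 1 := by omega
        · rw [stmt19sub_X0]
        · rw [stmt19sub_X1]; simp
      have : p * X i - stmt19sub c (p * X i)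
          = (p - stmt19sub c p) * X i + stmt19sub c p * (X i - stmt19sub c (X i)) := by
        rw [map_mul]; ring
      rw [this]
      exact dvd_add (hp.mul_right _) (hXi.mul_left _)

lemma stmt19_comp (c : Polynomial ℚ) :
    stmt19eta.comp (stmt19psi c) = stmt19sub (stmt19eta c) := by
  apply MvPolynomial.algHom_ext
  intro i
  obtain rfl | rfl : i = 0 ∨ i = 1 := by omega
  · simp [stmt19psi, stmt19sub, stmt19eta]
  · simp [stmt19psi, stmt19sub, stmt19eta]

lemma stmt19_eval (c : Polynomial ℚ) (t : ℚ) (p : MvPolynomial (Fin 2) ℚ) :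
    Polynomial.eval t (stmt19psi c p) = eval ![Polynomial.eval t c, t] p := by
  have h : ((Polynomial.aeval t).comp (stmt19psi c) : MvPolynomial (Fin 2) ℚ →ₐ[ℚ] ℚ)
      = aeval ![Polynomial.eval t c, t] := by
    apply MvPolynomial.algHom_ext
    intro i
    obtain rfl | rfl : i = 0 ∨ i = 1 := by omega
    · simp [stmt19psi]
    · simp [stmt19psi]
  have h2 : (Polynomial.aeval t) (stmt19psi c p) = aeval ![Polynomial.eval t c, t] p :=
    AlgHom.congr_fun h p
  rw [Polynomial.coe_aeval_eq_eval] at h2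
  rw [h2, aeval_def, Algebra.algebraMap_self]
  rfl

lemma stmt19_dvd_of_psi_eq_zero (c : Polynomial ℚ) (p : MvPolynomial (Fin 2) ℚ)
    (h : stmt19psi c p = 0) : (X 0 - stmt19eta c) ∣ p := by
  have h1 : stmt19sub (stmt19eta c) p = 0 := by
    have := AlgHom.congr_fun (stmt19_comp c) p
    rw [AlgHom.comp_apply, h, map_zero] at this
    exact this.symm
  have := dvd_sub_stmt19sub (stmt19eta c) p
  rwa [h1, sub_zero] at this

lemma stmt19_span_eq_ker (c : Polynomial ℚ) :
    Ideal.span {(X 0 - stmt19eta c : MvPolynomial (Fin 2) ℚ)}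
      = RingHom.ker (stmt19psi c).toRingHom := by
  ext q
  rw [Ideal.mem_span_singleton, RingHom.mem_ker]
  constructor
  · rintro ⟨r, rfl⟩
    have hc : stmt19psi c (stmt19eta c) = c := by
      have : (stmt19psi c).comp stmt19eta = AlgHom.id ℚ (Polynomial ℚ) := by
        apply Polynomial.algHom_ext
        simp [stmt19psi, stmt19eta]
      exact AlgHom.congr_fun this c
    have hX0 : stmt19psi c (X 0) = c := by simp [stmt19psi]
    show stmt19psi c ((X 0 - stmt19eta c) * r) = 0
    rw [map_mul, map_sub, hX0, hc, sub_self, zero_mul]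
  · intro hq
    exact stmt19_dvd_of_psi_eq_zero c q hq

lemma stmt19_prime (c : Polynomial ℚ) (hc : (X 0 - stmt19eta c : MvPolynomial (Fin 2) ℚ) ≠ 0) :
    Prime (X 0 - stmt19eta c : MvPolynomial (Fin 2) ℚ) := by
  rw [← Ideal.span_singleton_prime hc, stmt19_span_eq_ker]
  exact RingHom.ker_isPrime _

lemma stmt19eta_X : stmt19eta Polynomial.X = X 1 := by simp [stmt19eta]
lemma stmt19eta_negX : stmt19eta (-Polynomial.X) = -(X 1) := by simp [stmt19eta]

theorem stmt_19 (I : Ideal (MvPolynomial (Fin 2) ℚ))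
    (hI : I = Ideal.span {X 0 ^ 2 - X 1 ^ 2}) :
    (∀ p : MvPolynomial (Fin 2) ℚ,
      p ∈ I ↔ ∀ n : ℕ, eval (fun i => (![(2 : ℚ) ^ n, (-2 : ℚ) ^ n] i)) p = 0) ∧
    I.IsRadical ∧ ¬ I.IsPrime := by
  subst hI
  have key : ∀ p : MvPolynomial (Fin 2) ℚ,
      p ∈ Ideal.span {(X 0 ^ 2 - X 1 ^ 2 : MvPolynomial (Fin 2) ℚ)} ↔
      ∀ n : ℕ, eval (fun i => (![(2 : ℚ) ^ n, (-2 : ℚ) ^ n] i)) p = 0 := by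
    intro p
    constructor
    · -- forward: multiples of X0²-X1² vanish at all the points
      rw [Ideal.mem_span_singleton]
      rintro ⟨r, rfl⟩ n
      have h4 : ((2 : ℚ) ^ n) ^ 2 - ((-2 : ℚ) ^ n) ^ 2 = 0 := by
        rw [← pow_mul, ← pow_mul, mul_comm n 2, pow_mul, pow_mul]
        norm_num
      simp only [map_mul, map_sub, map_pow, eval_X, Matrix.cons_val_zero,
        Matrix.cons_val_one, Matrix.head_cons]
      rw [h4, zero_mul]
    · intro h
      have h' : ∀ n : ℕ, eval ![(2 : ℚ) ^ n, (-2 : ℚ) ^ n] p = 0 := h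
      -- diagonal: (X 0 - X 1) ∣ p
      have hpsi1 : stmt19psi Polynomial.X p = 0 := by
        apply Polynomial.eq_zero_of_infinite_isRoot
        apply Set.infinite_of_injective_forall_mem
          (f := fun k : ℕ => (4 : ℚ) ^ k)
        · intro a b hab
          exact StrictMono.injective
            (strictMono_nat_of_lt_succ fun m => by
              have h0 : (0 : ℚ) < 4 ^ m := by positivity
              have : (4 : ℚ) ^ m < 4 ^ m * 4 := by linarith
              simp only [pow_succ]
              exact this) hab
        · intro k
          have e1 : (2 : ℚ) ^ (2 * k) = 4 ^ k := by
            rw [pow_mul]; norm_num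
          have e2 : ((-2 : ℚ)) ^ (2 * k) = 4 ^ k := by
            rw [pow_mul]; norm_num
          have := h' (2 * k)
          rw [e1, e2] at this
          show Polynomial.IsRoot _ _
          rw [Polynomial.IsRoot, stmt19_eval]
          simpa using this
      have hdvd1 : (X 0 - X 1 : MvPolynomial (Fin 2) ℚ) ∣ p := by
        have := stmt19_dvd_of_psi_eq_zero Polynomial.X p hpsi1
        rwa [stmt19eta_X] at this
      -- antidiagonal: (X 0 + X 1) ∣ p
      have hpsi2 : stmt19psi (-Polynomial.X) p = 0 := by
        apply Polynomial.eq_zero_of_infinite_isRoot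
        apply Set.infinite_of_injective_forall_mem
          (f := fun k : ℕ => -((2 : ℚ) ^ (2 * k + 1)))
        · intro a b hab
          simp only [neg_inj] at hab
          have hinj : Function.Injective (fun m : ℕ => (2 : ℚ) ^ m) :=
            StrictMono.injective
              (strictMono_nat_of_lt_succ fun m => by
                have h0 : (0 : ℚ) < 2 ^ m := by positivity
                have : (2 : ℚ) ^ m < 2 ^ m * 2 := by linarith
                simp only [pow_succ]
                exact this)
          have := hinj hab
          omega
        · intro k
          have e2 : ((-2 : ℚ)) ^ (2 * k + 1) = -(2 ^ (2 * k + 1)) := by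
            rw [Odd.neg_pow ⟨k, by ring⟩]
          have := h' (2 * k + 1)
          rw [e2] at this
          show Polynomial.IsRoot _ _
          rw [Polynomial.IsRoot, stmt19_eval]
          simpa using this
      have hdvd2 : (X 0 - stmt19eta (-Polynomial.X) : MvPolynomial (Fin 2) ℚ) ∣ p :=
        stmt19_dvd_of_psi_eq_zero (-Polynomial.X) p hpsi2
      rw [stmt19eta_negX, sub_neg_eq_add] at hdvd2
      -- combine
      have hne : (X 0 + X 1 : MvPolynomial (Fin 2) ℚ) ≠ 0 := by
        intro hzero
        have := congrArg (eval ![(1 : ℚ), 1]) hzero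
        simp at this
      have hprime : Prime (X 0 + X 1 : MvPolynomial (Fin 2) ℚ) := by
        have := stmt19_prime (-Polynomial.X) (by rwa [stmt19eta_negX, sub_neg_eq_add])
        rwa [stmt19eta_negX, sub_neg_eq_add] at this
      obtain ⟨a, rfl⟩ := hdvd1
      have hnd : ¬ (X 0 + X 1 : MvPolynomial (Fin 2) ℚ) ∣ (X 0 - X 1) := by
        intro hd
        have := map_dvd (eval ![(1 : ℚ), -1]) hd
        simp at this
      have ha : (X 0 + X 1 : MvPolynomial (Fin 2) ℚ) ∣ a :=
        (hprime.dvd_or_dvd hdvd2).resolve_left hnd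
      obtain ⟨b, rfl⟩ := ha
      rw [Ideal.mem_span_singleton]
      exact ⟨b, by ring⟩
  refine ⟨key, ?_, ?_⟩
  · -- radical
    intro x hx
    obtain ⟨n, hn⟩ := hx
    rcases n with _ | n
    · exfalso
      rw [key] at hn
      have := hn 0
      simp at this
    · rw [key] at hn ⊢
      intro m
      have := hn m
      rw [map_pow] at this
      exact pow_eq_zero_iff (Nat.succ_ne_zero n) |>.mp this
  · -- not prime
    intro hP
    have hmem : (X 0 - X 1) * (X 0 + X 1) ∈
        Ideal.span {(X 0 ^ 2 - X 1 ^ 2 : MvPolynomial (Fin 2) ℚ)} := by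
      rw [Ideal.mem_span_singleton]
      exact ⟨1, by ring⟩
    rcases hP.mem_or_mem hmem with h1 | h2
    · rw [key] at h1
      have := h1 1
      norm_num at this
    · rw [key] at h2
      have := h2 0
      norm_num at this
end
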